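/- Let n ≥ 3 and let f : {0,1}^n → ℝ be strictly submodular, i.e. A^{(ij)} f < 0 for all i ≠ j in [n]. Then the supermodular rank of f is exactly ⌈log₂ n⌉: f can be written as a sum of ⌈log₂ n⌉ π-supermodular functions but not as a sum of fewer. -/
import Mathlib


/-!
Statement 0: A function f : {0,1}^n → ℝ (identified with a function on subsets of [n])
is π-supermodular iff for all i ≠ j the signed elementary imset inequalities
τ_i τ_j A^{(ij)} f ≥ 0 hold.

We encode a tuple π of linear orders on {0,1} by its sign vector
τ : Fin n → Bool, where `true` means the standard order 0 < 1 (sign +1)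
and `false` means the reversed order 1 < 0 (sign −1).
-/

/-- Componentwise meet of two subsets (as indicator vectors) w.r.t. the
product order with sign vector `τ`. -/
def piMeet {n : ℕ} (τ : Fin n → Bool) (S T : Finset (Fin n)) : Finset (Fin n) :=
  Finset.univ.filter fun i => if τ i then i ∈ S ∧ i ∈ T else i ∈ S ∨ i ∈ T

/-- Componentwise join of two subsets (as indicator vectors) w.r.t. the
product order with sign vector `τ`. -/
def piJoin {n : ℕ} (τ : Fin n → Bool) (S T : Finset (Fin n)) : Finset (Fin n) :=
  Finset.univ.filter fun i => if τ i then i ∈ S ∨ i ∈ T else i ∈ S ∧ i ∈ T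

/-- `f` is supermodular w.r.t. the product order with sign vector `τ`. -/
def IsPiSupermodular {n : ℕ} (τ : Fin n → Bool) (f : Finset (Fin n) → ℝ) : Prop :=
  ∀ S T : Finset (Fin n), f S + f T ≤ f (piMeet τ S T) + f (piJoin τ S T)

/-- The sign τ_i ∈ {±1} of the i-th linear order, as a real number. -/
noncomputable def signR {n : ℕ} (τ : Fin n → Bool) (i : Fin n) : ℝ :=
  if τ i then 1 else -1

/-- The elementary imset expression: the row of `A^{(ij)} f` corresponding to
`z ⊆ [n] ∖ {i,j}`, namely `f(z) + f(z ∪ {i,j}) − f(z ∪ {i}) − f(z ∪ {j})`. -/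
def imsetExpr {n : ℕ} (f : Finset (Fin n) → ℝ) (i j : Fin n) (z : Finset (Fin n)) : ℝ :=
  f z + f (insert i (insert j z)) - f (insert i z) - f (insert j z)


/-! ### Auxiliary lemmas -/

section Aux

open Finset

lemma incr_mono {n : ℕ} (f : Finset (Fin n) → ℝ)
    (h : ∀ i j : Fin n, i ≠ j → ∀ z, i ∉ z → j ∉ z → 0 ≤ imsetExpr f i j z) :
    ∀ (m : ℕ) (S T : Finset (Fin n)) (i : Fin n), (T \ S).card ≤ m → S ⊆ T → i ∉ T →
      f (insert i S) - f S ≤ f (insert i T) - f T := by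
  intro m
  induction m with
  | zero =>
    intro S T i hc hST hi
    have hTS : T \ S = ∅ := Finset.card_eq_zero.mp (Nat.le_zero.mp hc)
    have : S = T := Finset.Subset.antisymm hST (Finset.sdiff_eq_empty_iff_subset.mp hTS)
    rw [this]
  | succ m ih =>
    intro S T i hc hST hi
    by_cases hTS : T ⊆ S
    · have : S = T := Finset.Subset.antisymm hST hTS
      rw [this]
    · obtain ⟨j, hjT, hjS⟩ := Finset.not_subset.mp hTS
      set T' := T.erase j with hT'
      have hST' : S ⊆ T' := Finset.subset_erase.mpr ⟨hST, hjS⟩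
      have hiT' : i ∉ T' := fun hmem => hi (Finset.mem_of_mem_erase hmem)
      have hsub : T' \ S ⊆ T \ S :=
        Finset.sdiff_subset_sdiff (Finset.erase_subset _ _) (le_refl _)
      have hjmem : j ∈ T \ S := Finset.mem_sdiff.mpr ⟨hjT, hjS⟩
      have hjnot : j ∉ T' \ S := fun hmem =>
        (Finset.notMem_erase j T) (Finset.mem_sdiff.mp hmem).1
      have hlt : (T' \ S).card < (T \ S).card :=
        Finset.card_lt_card ⟨hsub, fun hx => hjnot (hx hjmem)⟩
      have hcard : (T' \ S).card ≤ m := by omega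
      have h1 := ih S T' i hcard hST' hiT'
      have hij : i ≠ j := fun e => hi (e ▸ hjT)
      have h2 := h i j hij T' hiT' (Finset.notMem_erase j T)
      have hins : insert j T' = T := Finset.insert_erase hjT
      unfold imsetExpr at h2
      rw [hins] at h2
      linarith

lemma supermodular_of_imset {n : ℕ} (f : Finset (Fin n) → ℝ)
    (h : ∀ i j : Fin n, i ≠ j → ∀ z, i ∉ z → j ∉ z → 0 ≤ imsetExpr f i j z) :
    ∀ S T : Finset (Fin n), f S + f T ≤ f (S ∩ T) + f (S ∪ T) := by
  suffices H : ∀ (m : ℕ) (S T : Finset (Fin n)), (S \ T).card ≤ m →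
      f S + f T ≤ f (S ∩ T) + f (S ∪ T) by
    intro S T; exact H _ S T (le_refl _)
  intro m
  induction m with
  | zero =>
    intro S T hc
    have hST : S ⊆ T := Finset.sdiff_eq_empty_iff_subset.mp
      (Finset.card_eq_zero.mp (Nat.le_zero.mp hc))
    rw [Finset.inter_eq_left.mpr hST, Finset.union_eq_right.mpr hST]
  | succ m ih =>
    intro S T hc
    by_cases hST : S ⊆ T
    · rw [Finset.inter_eq_left.mpr hST, Finset.union_eq_right.mpr hST]
    · obtain ⟨a, haS, haT⟩ := Finset.not_subset.mp hST
      set S' := S.erase a with hS'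
      have hsub : S' \ T ⊆ S \ T :=
        Finset.sdiff_subset_sdiff (Finset.erase_subset _ _) (le_refl _)
      have hamem : a ∈ S \ T := Finset.mem_sdiff.mpr ⟨haS, haT⟩
      have hanot : a ∉ S' \ T := fun hmem =>
        (Finset.notMem_erase a S) (Finset.mem_sdiff.mp hmem).1
      have hlt : (S' \ T).card < (S \ T).card :=
        Finset.card_lt_card ⟨hsub, fun hx => hanot (hx hamem)⟩
      have hcard : (S' \ T).card ≤ m := by omega
      have h1 := ih S' T hcard
      have haU : a ∉ S' ∪ T := by
        simp [hS', haT]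
      have h2 := incr_mono f h ((S' ∪ T) \ S').card S' (S' ∪ T) a (le_refl _)
        Finset.subset_union_left haU
      have e1 : insert a S' = S := Finset.insert_erase haS
      have e2 : insert a (S' ∪ T) = S ∪ T := by
        rw [← e1, Finset.insert_union]
      have e3 : S ∩ T = S' ∩ T := by
        ext x
        simp only [Finset.mem_inter, hS', Finset.mem_erase]
        constructor
        · rintro ⟨hx1, hx2⟩
          exact ⟨⟨fun e => haT (e ▸ hx2), hx1⟩, hx2⟩
        · rintro ⟨⟨_, hx1⟩, hx2⟩; exact ⟨hx1, hx2⟩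
      rw [e1, e2] at h2
      rw [e3]
      linarith

def tflip {n : ℕ} (τ : Fin n → Bool) (S : Finset (Fin n)) : Finset (Fin n) :=
  Finset.univ.filter fun i => if τ i then i ∈ S else i ∉ S

lemma mem_tflip {n : ℕ} (τ : Fin n → Bool) (S : Finset (Fin n)) (i : Fin n) :
    i ∈ tflip τ S ↔ (if τ i then i ∈ S else i ∉ S) := by
  simp [tflip]

lemma tflip_meet {n : ℕ} (τ : Fin n → Bool) (S T : Finset (Fin n)) :
    tflip τ (tflip τ S ∩ tflip τ T) = piMeet τ S T := by
  ext i
  by_cases h : τ i <;> simp [mem_tflip, piMeet, h] <;> tauto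

lemma tflip_join {n : ℕ} (τ : Fin n → Bool) (S T : Finset (Fin n)) :
    tflip τ (tflip τ S ∪ tflip τ T) = piJoin τ S T := by
  ext i
  by_cases h : τ i <;> simp [mem_tflip, piJoin, h] <;> tauto

lemma tflip_tflip {n : ℕ} (τ : Fin n → Bool) (S : Finset (Fin n)) :
    tflip τ (tflip τ S) = S := by
  ext i
  by_cases h : τ i <;> simp [mem_tflip, h]

lemma tflip_insert_true {n : ℕ} (τ : Fin n → Bool) (S : Finset (Fin n)) (i : Fin n)
    (h : τ i = true) : tflip τ (insert i S) = insert i (tflip τ S) := by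
  ext p
  by_cases hp : p = i
  · subst hp; simp [mem_tflip, h]
  · by_cases hτ : τ p <;> simp [mem_tflip, hτ, hp]

lemma tflip_insert_false {n : ℕ} (τ : Fin n → Bool) (S : Finset (Fin n)) (i : Fin n)
    (h : τ i = false) : tflip τ (insert i S) = (tflip τ S).erase i := by
  ext p
  by_cases hp : p = i
  · subst hp; simp [mem_tflip, h]
  · by_cases hτ : τ p <;> simp [mem_tflip, hτ, hp]

lemma mem_tflip_true {n : ℕ} {τ : Fin n → Bool} {S : Finset (Fin n)} {i : Fin n}
    (h : τ i = true) : i ∈ tflip τ S ↔ i ∈ S := by simp [mem_tflip, h]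

lemma mem_tflip_false {n : ℕ} {τ : Fin n → Bool} {S : Finset (Fin n)} {i : Fin n}
    (h : τ i = false) : i ∈ tflip τ S ↔ i ∉ S := by simp [mem_tflip, h]

lemma signR_mul_eq_one {n : ℕ} {τ : Fin n → Bool} {i j : Fin n}
    (h : τ i = τ j) : signR τ i * signR τ j = 1 := by
  unfold signR
  rw [← h]
  by_cases hti : τ i <;> simp [hti]

lemma signR_mul_true_true {n : ℕ} {τ : Fin n → Bool} {i j : Fin n}
    (hi : τ i = true) (hj : τ j = true) : signR τ i * signR τ j = 1 := by
  simp [signR, hi, hj]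

lemma signR_mul_false_false {n : ℕ} {τ : Fin n → Bool} {i j : Fin n}
    (hi : τ i = false) (hj : τ j = false) : signR τ i * signR τ j = 1 := by
  simp [signR, hi, hj]

lemma signR_mul_mixed {n : ℕ} {τ : Fin n → Bool} {i j : Fin n}
    (hij : τ i ≠ τ j) : signR τ i * signR τ j = -1 := by
  rcases Bool.eq_false_or_eq_true (τ i) with hi | hi <;>
    rcases Bool.eq_false_or_eq_true (τ j) with hj | hj <;>
    simp [signR, hi, hj] at hij ⊢

lemma pi_supermodular_of_signed_imset {n : ℕ} (τ : Fin n → Bool) (f : Finset (Fin n) → ℝ)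
    (h : ∀ i j : Fin n, i ≠ j → ∀ z, i ∉ z → j ∉ z →
      0 ≤ signR τ i * signR τ j * imsetExpr f i j z) :
    IsPiSupermodular τ f := by
  have hF : ∀ i j : Fin n, i ≠ j → ∀ z, i ∉ z → j ∉ z →
      0 ≤ imsetExpr (fun S => f (tflip τ S)) i j z := by
    intro i j hij z hiz hjz
    show 0 ≤ f (tflip τ z) + f (tflip τ (insert i (insert j z)))
        - f (tflip τ (insert i z)) - f (tflip τ (insert j z))
    set w := tflip τ z with hw
    rcases Bool.eq_false_or_eq_true (τ i) with hti | hti <;>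
      rcases Bool.eq_false_or_eq_true (τ j) with htj | htj
    · -- τ i = true, τ j = true
      have hiw : i ∉ w := fun hm => hiz ((mem_tflip_true hti).mp hm)
      have hjw : j ∉ w := fun hm => hjz ((mem_tflip_true htj).mp hm)
      have e1 : tflip τ (insert i z) = insert i w := by
        rw [tflip_insert_true τ z i hti]
      have e2 : tflip τ (insert j z) = insert j w := by
        rw [tflip_insert_true τ z j htj]
      have e3 : tflip τ (insert i (insert j z)) = insert i (insert j w) := by
        rw [tflip_insert_true τ _ i hti, tflip_insert_true τ z j htj]
      rw [e1, e2, e3]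
      have h0 := h i j hij w hiw hjw
      rw [signR_mul_true_true hti htj, one_mul] at h0
      unfold imsetExpr at h0
      linarith
    · -- τ i = true, τ j = false
      have hiw : i ∉ w := fun hm => hiz ((mem_tflip_true hti).mp hm)
      have hjw : j ∈ w := (mem_tflip_false htj).mpr hjz
      set u := w.erase j with hu
      have hju : j ∉ u := Finset.notMem_erase _ _
      have hiu : i ∉ u := fun hm => hiw (Finset.mem_of_mem_erase hm)
      have ew : w = insert j u := (Finset.insert_erase hjw).symm
      have e1 : tflip τ (insert i z) = insert i (insert j u) := by
        rw [tflip_insert_true τ z i hti, ← hw, ew]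
      have e2 : tflip τ (insert j z) = u := by
        rw [tflip_insert_false τ z j htj, ← hw, hu]
      have e3 : tflip τ (insert i (insert j z)) = insert i u := by
        rw [tflip_insert_true τ _ i hti, tflip_insert_false τ z j htj, ← hw, hu]
      rw [e1, e2, e3, ew]
      have h0 := h i j hij u hiu hju
      rw [signR_mul_mixed (by rw [hti, htj]; simp)] at h0
      unfold imsetExpr at h0
      nlinarith [h0]
    · -- τ i = false, τ j = true
      have hiw : i ∈ w := (mem_tflip_false hti).mpr hiz
      have hjw : j ∉ w := fun hm => hjz ((mem_tflip_true htj).mp hm)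
      set u := w.erase i with hu
      have hiu : i ∉ u := Finset.notMem_erase _ _
      have hju : j ∉ u := fun hm => hjw (Finset.mem_of_mem_erase hm)
      have ew : w = insert i u := (Finset.insert_erase hiw).symm
      have e1 : tflip τ (insert i z) = u := by
        rw [tflip_insert_false τ z i hti, ← hw, hu]
      have e2 : tflip τ (insert j z) = insert j (insert i u) := by
        rw [tflip_insert_true τ z j htj, ← hw, ew]
      have e3 : tflip τ (insert i (insert j z)) = insert j u := by
        rw [tflip_insert_false τ _ i hti, tflip_insert_true τ z j htj, ← hw,
          Finset.erase_insert_of_ne (Ne.symm hij), ← hu]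
      rw [e1, e2, e3, ew]
      have h0 := h i j hij u hiu hju
      rw [signR_mul_mixed (by rw [hti, htj]; simp)] at h0
      unfold imsetExpr at h0
      rw [Finset.insert_comm] at h0
      nlinarith [h0]
    · -- τ i = false, τ j = false
      have hiw : i ∈ w := (mem_tflip_false hti).mpr hiz
      have hjw : j ∈ w := (mem_tflip_false htj).mpr hjz
      set u := (w.erase i).erase j with hu
      have hju : j ∉ u := Finset.notMem_erase _ _
      have hiu : i ∉ u := fun hm =>
        Finset.notMem_erase i w (Finset.mem_of_mem_erase hm)
      have hjw' : j ∈ w.erase i := Finset.mem_erase.mpr ⟨Ne.symm hij, hjw⟩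
      have hiw' : i ∈ w.erase j := Finset.mem_erase.mpr ⟨hij, hiw⟩
      have e1 : tflip τ (insert i z) = insert j u := by
        rw [tflip_insert_false τ z i hti, ← hw, hu, Finset.insert_erase hjw']
      have e2 : tflip τ (insert j z) = insert i u := by
        rw [tflip_insert_false τ z j htj, ← hw, hu, Finset.erase_right_comm,
          Finset.insert_erase hiw']
      have e3 : tflip τ (insert i (insert j z)) = u := by
        rw [tflip_insert_false τ _ i hti, tflip_insert_false τ z j htj, ← hw, hu,
          Finset.erase_right_comm]
      have ew : w = insert i (insert j u) := by
        rw [hu, Finset.insert_erase hjw', Finset.insert_erase hiw]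
      rw [e1, e2, e3, ew]
      have h0 := h i j hij u hiu hju
      rw [signR_mul_false_false hti htj, one_mul] at h0
      unfold imsetExpr at h0
      linarith
  intro S T
  have h2 := supermodular_of_imset (fun S => f (tflip τ S)) hF (tflip τ S) (tflip τ T)
  simp only [tflip_tflip] at h2
  calc f S + f T
      ≤ f (tflip τ (tflip τ S ∩ tflip τ T)) + f (tflip τ (tflip τ S ∪ tflip τ T)) := h2
    _ = f (piMeet τ S T) + f (piJoin τ S T) := by rw [tflip_meet, tflip_join]

lemma imset_nonneg_of_pi_supermodular {n : ℕ} {τ : Fin n → Bool} {g : Finset (Fin n) → ℝ}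
    (hg : IsPiSupermodular τ g) {i j : Fin n} (hij : i ≠ j) (hτ : τ i = τ j)
    {z : Finset (Fin n)} (hiz : i ∉ z) (hjz : j ∉ z) :
    0 ≤ imsetExpr g i j z := by
  have h0 := hg (insert i z) (insert j z)
  cases hti : τ i with
  | false =>
    have htj : τ j = false := hτ ▸ hti
    have hmeet : piMeet τ (insert i z) (insert j z) = insert i (insert j z) := by
      ext p
      by_cases hpi : p = i
      · subst hpi; simp [piMeet, hti, Finset.mem_insert]
      · by_cases hpj : p = j
        · subst hpj; simp [piMeet, htj, Finset.mem_insert]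
        · by_cases hp : τ p <;>
            simp [piMeet, hp, hpi, hpj, Finset.mem_insert] <;> tauto
    have hjoin : piJoin τ (insert i z) (insert j z) = z := by
      ext p
      by_cases hpi : p = i
      · subst hpi; simp [piJoin, hti, Finset.mem_insert, hiz, hij]
      · by_cases hpj : p = j
        · subst hpj; simp [piJoin, htj, Finset.mem_insert, hjz, Ne.symm hij]
        · by_cases hp : τ p <;>
            simp [piJoin, hp, hpi, hpj, Finset.mem_insert] <;> tauto
    rw [hmeet, hjoin] at h0
    unfold imsetExpr
    linarith
  | true =>
    have htj : τ j = true := hτ ▸ hti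
    have hmeet : piMeet τ (insert i z) (insert j z) = z := by
      ext p
      by_cases hpi : p = i
      · subst hpi; simp [piMeet, hti, Finset.mem_insert, hiz, hij]
      · by_cases hpj : p = j
        · subst hpj; simp [piMeet, htj, Finset.mem_insert, hjz, Ne.symm hij]
        · by_cases hp : τ p <;>
            simp [piMeet, hp, hpi, hpj, Finset.mem_insert] <;> tauto
    have hjoin : piJoin τ (insert i z) (insert j z) = insert i (insert j z) := by
      ext p
      by_cases hpi : p = i
      · subst hpi; simp [piJoin, hti, Finset.mem_insert]
      · by_cases hpj : p = j
        · subst hpj; simp [piJoin, htj, Finset.mem_insert]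
        · by_cases hp : τ p <;>
            simp [piJoin, hp, hpi, hpj, Finset.mem_insert] <;> tauto
    rw [hmeet, hjoin] at h0
    unfold imsetExpr
    linarith

lemma imsetExpr_sub {n : ℕ} (f g : Finset (Fin n) → ℝ) (i j : Fin n) (z : Finset (Fin n)) :
    imsetExpr (fun S => f S - g S) i j z = imsetExpr f i j z - imsetExpr g i j z := by
  unfold imsetExpr; ring

lemma imsetExpr_sum {n : ℕ} {ι : Type*} (s : Finset ι) (g : ι → Finset (Fin n) → ℝ)
    (i j : Fin n) (z : Finset (Fin n)) :
    imsetExpr (fun S => ∑ k ∈ s, g k S) i j z = ∑ k ∈ s, imsetExpr (g k) i j z := by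
  unfold imsetExpr
  rw [Finset.sum_sub_distrib, Finset.sum_sub_distrib, Finset.sum_add_distrib]

noncomputable def ind {n : ℕ} (S : Finset (Fin n)) (p : Fin n) : ℝ :=
  if p ∈ S then 1 else 0

lemma ind_insert {n : ℕ} (S : Finset (Fin n)) (i p : Fin n) :
    ind (insert i S) p = if p = i then 1 else ind S p := by
  by_cases hp : p = i
  · simp [ind, hp]
  · simp [ind, Finset.mem_insert, hp]

lemma quad_bracket {n : ℕ} {i j : Fin n} {z : Finset (Fin n)}
    (hij : i ≠ j) (hiz : i ∉ z) (hjz : j ∉ z) (p q : Fin n) :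
    ind z p * ind z q + ind (insert i (insert j z)) p * ind (insert i (insert j z)) q
      - ind (insert i z) p * ind (insert i z) q - ind (insert j z) p * ind (insert j z) q
    = if (p = i ∧ q = j) ∨ (p = j ∧ q = i) then 1 else 0 := by
  have hzi : ind z i = 0 := by simp [ind, hiz]
  have hzj : ind z j = 0 := by simp [ind, hjz]
  by_cases hpi : p = i <;> by_cases hpj : p = j <;>
    by_cases hqi : q = i <;> by_cases hqj : q = j <;>
    simp_all [ind_insert, hij, Ne.symm hij] <;> ring

noncomputable def quadF {n : ℕ} (b : Fin n → Fin n → ℝ) (S : Finset (Fin n)) : ℝ :=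
  ∑ x : Fin n × Fin n, b x.1 x.2 * ind S x.1 * ind S x.2

lemma imsetExpr_quad {n : ℕ} (b : Fin n → Fin n → ℝ) {i j : Fin n} {z : Finset (Fin n)}
    (hij : i ≠ j) (hiz : i ∉ z) (hjz : j ∉ z) :
    imsetExpr (quadF b) i j z = b i j + b j i := by
  unfold imsetExpr quadF
  rw [← Finset.sum_add_distrib, ← Finset.sum_sub_distrib, ← Finset.sum_sub_distrib]
  have hterm : ∀ x ∈ (Finset.univ : Finset (Fin n × Fin n)),
      b x.1 x.2 * ind z x.1 * ind z x.2
        + b x.1 x.2 * ind (insert i (insert j z)) x.1 * ind (insert i (insert j z)) x.2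
        - b x.1 x.2 * ind (insert i z) x.1 * ind (insert i z) x.2
        - b x.1 x.2 * ind (insert j z) x.1 * ind (insert j z) x.2
      = (if x = (i, j) then b i j else 0) + (if x = (j, i) then b j i else 0) := by
    rintro ⟨p, q⟩ -
    have e := quad_bracket hij hiz hjz p q
    have lhs_eq : b p q * ind z p * ind z q
        + b p q * ind (insert i (insert j z)) p * ind (insert i (insert j z)) q
        - b p q * ind (insert i z) p * ind (insert i z) q
        - b p q * ind (insert j z) p * ind (insert j z) q
      = b p q * (ind z p * ind z q
        + ind (insert i (insert j z)) p * ind (insert i (insert j z)) q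
        - ind (insert i z) p * ind (insert i z) q
        - ind (insert j z) p * ind (insert j z) q) := by ring
    rw [lhs_eq, e]
    by_cases h1 : p = i ∧ q = j
    · obtain ⟨rfl, rfl⟩ := h1
      simp [hij, Ne.symm hij, Prod.ext_iff]
    · by_cases h2 : p = j ∧ q = i
      · obtain ⟨rfl, rfl⟩ := h2
        simp [hij, Ne.symm hij, Prod.ext_iff]
      · simp [h1, h2, Prod.ext_iff]
  rw [Finset.sum_congr rfl hterm, Finset.sum_add_distrib,
    Finset.sum_ite_eq' Finset.univ ((i, j) : Fin n × Fin n) (fun _ => b i j),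
    Finset.sum_ite_eq' Finset.univ ((j, i) : Fin n × Fin n) (fun _ => b j i)]
  simp

lemma upper_bound {n r : ℕ} (hr : 0 < r) (hn : 0 < n) (hn2r : n ≤ 2 ^ r)
    (f : Finset (Fin n) → ℝ)
    (hstrict : ∀ i j : Fin n, i ≠ j → ∀ z : Finset (Fin n), i ∉ z → j ∉ z →
      imsetExpr f i j z < 0) :
    ∃ (τ : Fin r → Fin n → Bool) (g : Fin r → Finset (Fin n) → ℝ),
      (∀ k, IsPiSupermodular (τ k) (g k)) ∧ f = ∑ k, g k := by
  classical
  haveI : Nonempty (Fin n) := ⟨⟨0, hn⟩⟩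
  set τ : Fin r → Fin n → Bool := fun k i => Nat.testBit i.val k.val with hτdef
  have hdiff : ∀ i j : Fin n, i ≠ j → ∃ k : Fin r, τ k i ≠ τ k j := by
    intro i j hij
    by_contra hc
    push_neg at hc
    refine hij (Fin.ext (Nat.eq_of_testBit_eq fun m => ?_))
    by_cases hm : m < r
    · have := hc ⟨m, hm⟩
      simpa [hτdef] using this
    · have h2 : (2:ℕ) ^ r ≤ 2 ^ m := Nat.pow_le_pow_right (by norm_num) (le_of_not_gt hm)
      have hi : (i : ℕ) < 2 ^ m := lt_of_lt_of_le i.isLt (le_trans hn2r h2)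
      have hj : (j : ℕ) < 2 ^ m := lt_of_lt_of_le j.isLt (le_trans hn2r h2)
      rw [Nat.testBit_eq_false_of_lt hi, Nat.testBit_eq_false_of_lt hj]
  set k0 : Fin r := ⟨0, hr⟩ with hk0def
  set D : Fin n → Fin n → Finset (Fin r) :=
    fun i j => Finset.univ.filter (fun k => τ k i ≠ τ k j) with hDdef
  set κ : Fin n → Fin n → Fin r :=
    fun i j => if h : (D i j).Nonempty then (D i j).min' h else k0 with hκdef
  have hκD : ∀ i j : Fin n, i ≠ j → τ (κ i j) i ≠ τ (κ i j) j := by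
    intro i j hij
    obtain ⟨k, hk⟩ := hdiff i j hij
    have hne : (D i j).Nonempty := ⟨k, by simp [hDdef, hk]⟩
    have hκeq : κ i j = (D i j).min' hne := by simp [hκdef, hne]
    rw [hκeq]
    have hmem := (D i j).min'_mem hne
    simpa [hDdef] using hmem
  set C : ℝ := min 0 (Finset.univ.inf' Finset.univ_nonempty
      (fun x : Fin n × Fin n × Finset (Fin n) => imsetExpr f x.1 x.2.1 x.2.2)) with hCdef
  have hC0 : C ≤ 0 := min_le_left _ _
  have hCle : ∀ i j z, C ≤ imsetExpr f i j z := fun i j z =>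
    le_trans (min_le_right _ _) (Finset.inf'_le _ (Finset.mem_univ (i, j, z)))
  set b : Fin r → Fin n → Fin n → ℝ := fun k p q =>
    if p ≠ q ∧ τ k0 p = τ k0 q ∧ k = κ p q then C / 2 else 0 with hbdef
  have hb0 : ∀ p q, b k0 p q = 0 := by
    intro p q
    simp only [hbdef]
    split
    next hcond =>
      exact absurd (hcond.2.2 ▸ hcond.2.1) (hκD p q hcond.1)
    next => rfl
  set Q : Fin r → Finset (Fin n) → ℝ := fun k => quadF (b k) with hQdef
  have hQ0 : ∀ S, Q k0 S = 0 := by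
    intro S
    simp [hQdef, quadF, hb0]
  set g : Fin r → Finset (Fin n) → ℝ := fun k =>
    if k = k0 then (fun S => f S - ∑ k', Q k' S) else Q k with hgdef
  refine ⟨τ, g, ?_, ?_⟩
  · intro k
    apply pi_supermodular_of_signed_imset
    intro i j hij z hiz hjz
    by_cases hk : k = k0
    · subst hk
      have hgk : g k0 = fun S => f S - ∑ k', Q k' S := by simp [hgdef]
      rw [hgk]
      have him : imsetExpr (fun S => f S - ∑ k', Q k' S) i j z
          = imsetExpr f i j z - ∑ k', (b k' i j + b k' j i) := by
        rw [imsetExpr_sub f (fun S => ∑ k', Q k' S) i j z,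
          imsetExpr_sum Finset.univ Q i j z]
        congr 1
        exact Finset.sum_congr rfl fun k' _ => imsetExpr_quad (b k') hij hiz hjz
      rw [him]
      by_cases hτ0 : τ k0 i = τ k0 j
      · rw [signR_mul_eq_one hτ0, one_mul]
        have hsum1 : ∑ k', b k' i j = C / 2 := by
          have hbeq : ∀ k' : Fin r, b k' i j = if k' = κ i j then C / 2 else 0 := by
            intro k'; simp [hbdef, hij, hτ0]
          rw [Finset.sum_congr rfl fun k' _ => hbeq k',
            Finset.sum_ite_eq' Finset.univ (κ i j) (fun _ => C / 2)]
          simp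
        have hsum2 : ∑ k', b k' j i = C / 2 := by
          have hbeq : ∀ k' : Fin r, b k' j i = if k' = κ j i then C / 2 else 0 := by
            intro k'; simp [hbdef, Ne.symm hij, hτ0.symm]
          rw [Finset.sum_congr rfl fun k' _ => hbeq k',
            Finset.sum_ite_eq' Finset.univ (κ j i) (fun _ => C / 2)]
          simp
        rw [Finset.sum_add_distrib, hsum1, hsum2]
        have := hCle i j z
        linarith
      · rw [signR_mul_mixed hτ0]
        have hz : ∀ k' : Fin r, b k' i j + b k' j i = 0 := by
          intro k'
          have h1 : b k' i j = 0 := by simp [hbdef, hτ0]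
          have h2 : b k' j i = 0 := by simp [hbdef, Ne.symm hτ0]
          rw [h1, h2, add_zero]
        rw [Finset.sum_congr rfl fun k' _ => hz k', Finset.sum_const_zero, sub_zero]
        have := hstrict i j hij z hiz hjz
        nlinarith
    · have hgk : g k = Q k := by simp [hgdef, hk]
      rw [hgk, hQdef]
      rw [imsetExpr_quad (b k) hij hiz hjz]
      by_cases hτk : τ k i = τ k j
      · rw [signR_mul_eq_one hτk, one_mul]
        have h1 : b k i j = 0 := by
          simp only [hbdef]
          split
          next hcond =>
            rw [hcond.2.2] at hτk
            exact absurd hτk (hκD i j hcond.1)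
          next => rfl
        have h2 : b k j i = 0 := by
          simp only [hbdef]
          split
          next hcond =>
            have hτk' : τ k j = τ k i := hτk.symm
            rw [hcond.2.2] at hτk'
            exact absurd hτk' (hκD j i hcond.1)
          next => rfl
        rw [h1, h2]
        norm_num
      · rw [signR_mul_mixed hτk]
        have h1 : b k i j ≤ 0 := by
          simp only [hbdef]
          split
          · linarith
          · exact le_refl 0
        have h2 : b k j i ≤ 0 := by
          simp only [hbdef]
          split
          · linarith
          · exact le_refl 0
        nlinarith
  · funext S
    rw [Finset.sum_apply]
    rw [← Finset.add_sum_erase Finset.univ (fun k => g k S) (Finset.mem_univ k0)]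
    have h1 : g k0 S = f S - ∑ k', Q k' S := by simp [hgdef]
    have h2 : ∀ k ∈ Finset.univ.erase k0, g k S = Q k S := by
      intro k hk
      simp [hgdef, (Finset.mem_erase.mp hk).1]
    rw [h1, Finset.sum_congr rfl h2]
    have h3 : ∑ k', Q k' S = Q k0 S + ∑ k ∈ Finset.univ.erase k0, Q k S :=
      (Finset.add_sum_erase _ _ (Finset.mem_univ k0)).symm
    rw [h3, hQ0]
    ring

end Aux

/-!
Statement 4: for n ≥ 3, a strictly submodular function f (i.e. A^{(ij)} f < 0
for all i ≠ j, meaning every elementary imset expression is negative) has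
supermodular rank exactly ⌈log₂ n⌉: it is a sum of ⌈log₂ n⌉ π-supermodular
functions, but not a sum of ⌈log₂ n⌉ − 1 of them.
-/
theorem statement4 (n : ℕ) (hn : 3 ≤ n) (f : Finset (Fin n) → ℝ)
    (hstrict : ∀ i j : Fin n, i ≠ j → ∀ z : Finset (Fin n), i ∉ z → j ∉ z →
      imsetExpr f i j z < 0) :
    (∃ (τ : Fin (Nat.clog 2 n) → Fin n → Bool)
        (g : Fin (Nat.clog 2 n) → Finset (Fin n) → ℝ),
        (∀ k, IsPiSupermodular (τ k) (g k)) ∧ f = ∑ k, g k) ∧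
    ¬ ∃ (τ : Fin (Nat.clog 2 n - 1) → Fin n → Bool)
        (g : Fin (Nat.clog 2 n - 1) → Finset (Fin n) → ℝ),
        (∀ k, IsPiSupermodular (τ k) (g k)) ∧ f = ∑ k, g k := by
  constructor
  · exact upper_bound (Nat.clog_pos one_lt_two (by omega)) (by omega)
      (Nat.le_pow_clog one_lt_two n) f hstrict
  · rintro ⟨τ, g, hg, hsum⟩
    have hinj : Function.Injective
        (fun i : Fin n => (fun k => τ k i : Fin (Nat.clog 2 n - 1) → Bool)) := by
      intro i j hphi
      by_contra hij
      have heq : ∀ k, τ k i = τ k j := fun k => congrFun hphi k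
      have hkey : ∀ k, 0 ≤ imsetExpr (g k) i j ∅ := fun k =>
        imset_nonneg_of_pi_supermodular (hg k) hij (heq k)
          (Finset.notMem_empty i) (Finset.notMem_empty j)
      have hsum' : imsetExpr f i j ∅ = ∑ k, imsetExpr (g k) i j ∅ := by
        rw [hsum]
        have hfun : (∑ k, g k) = fun S => ∑ k, g k S := by
          funext S; exact Finset.sum_apply _ _ _
        rw [hfun, imsetExpr_sum]
      have hpos : 0 ≤ imsetExpr f i j ∅ :=
        hsum' ▸ Finset.sum_nonneg fun k _ => hkey k
      exact absurd (hstrict i j hij ∅ (Finset.notMem_empty i) (Finset.notMem_empty j))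
        (not_lt.mpr hpos)
    have hcard := Fintype.card_le_of_injective _ hinj
    have hcf : Fintype.card (Fin (Nat.clog 2 n - 1) → Bool) = 2 ^ (Nat.clog 2 n - 1) := by
      simp [Fintype.card_fun]
    rw [Fintype.card_fin] at hcard
    have hcard2 : n ≤ 2 ^ (Nat.clog 2 n - 1) := hcf ▸ hcard
    have hlt := Nat.pow_pred_clog_lt_self (b := 2) one_lt_two (x := n) (by omega)
    rw [Nat.pred_eq_sub_one] at hlt
    omega
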